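/- Let Γ be a finite connected 4-valent simple graph, let G ≤ Aut(Γ) act transitively on the arcs of Γ, and let N be a normal subgroup of G that is semiregular on VΓ and such that the quotient graph Γ/N is a cycle of length r ≥ 3. Let K be the kernel of the induced action of G on the set of N-orbits on VΓ. Then for every vertex v of Γ the stabiliser K_v is an elementary abelian 2-group. -/

import Mathlib

open SimpleGraph

noncomputable def fpr {V : Type*} (g : V → V) : ℚ :=
  (Nat.card {v : V // g v = v} : ℚ) / (Nat.card V : ℚ)

/-- The Praeger–Xu graph `C(r,s)`. -/
def praegerXu (r s : ℕ) : SimpleGraph (ZMod r × (Fin s → ZMod 2)) :=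
  SimpleGraph.fromRel (fun a b =>
    b.1 = a.1 + 1 ∧ ∀ (i : Fin s) (h : (i : ℕ) + 1 < s), b.2 i = a.2 ⟨(i : ℕ) + 1, h⟩)

/-- The Split Praeger–Xu graph `S(C(r,s))`; `1` plays the role of `+`, `0` of `−`. -/
def splitPraegerXu (r s : ℕ) : SimpleGraph ((ZMod r × (Fin s → ZMod 2)) × Fin 2) :=
  SimpleGraph.fromRel (fun a b => a.2 = 1 ∧ b.2 = 0 ∧
    (a.1 = b.1 ∨ (b.1.1 = a.1.1 + 1 ∧
      ∀ (i : Fin s) (h : (i : ℕ) + 1 < s), b.1.2 i = a.1.2 ⟨(i : ℕ) + 1, h⟩)))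

def VertexTransitive {V : Type*} (Γ : SimpleGraph V) : Prop :=
  ∀ u v : V, ∃ e : Γ ≃g Γ, e u = v

def EdgeTransitive {V : Type*} (Γ : SimpleGraph V) : Prop :=
  ∀ u v u' v' : V, Γ.Adj u v → Γ.Adj u' v' →
    ∃ e : Γ ≃g Γ, (e u = u' ∧ e v = v') ∨ (e u = v' ∧ e v = u')

def ArcTransitive {V : Type*} (Γ : SimpleGraph V) : Prop :=
  ∀ u v u' v' : V, Γ.Adj u v → Γ.Adj u' v' → ∃ e : Γ ≃g Γ, e u = u' ∧ e v = v'

-- exceptional graphs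
def Psi1 : SimpleGraph (Fin 5) := ⊤

def Psi2 : SimpleGraph (Fin 5 × Fin 2) :=
  SimpleGraph.fromRel (fun a b => a.2 ≠ b.2 ∧ a.1 ≠ b.1)

def Psi3 : SimpleGraph ({v : Fin 3 → ZMod 2 // v ≠ 0} × Fin 2) :=
  SimpleGraph.fromRel (fun a b => a.2 ≠ b.2 ∧ ∑ i, a.1.1 i * b.1.1 i ≠ 0)

instance : Fact (Nat.Prime 3) := ⟨by norm_num⟩

def Psi4 : SimpleGraph (Projectivization (ZMod 3) (Fin 3 → ZMod 3) × Fin 2) :=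
  SimpleGraph.fromRel (fun a b => a.2 ≠ b.2 ∧ ∑ i, a.1.rep i * b.1.rep i = 0)

def kneser (n k : ℕ) : SimpleGraph {s : Finset (Fin n) // s.card = k} :=
  SimpleGraph.fromRel (fun a b => Disjoint a.1 b.1)

def Psi5 : SimpleGraph {s : Finset (Fin 7) // s.card = 3} := kneser 7 3

def doubleCover {V : Type*} (G : SimpleGraph V) : SimpleGraph (V × Fin 2) :=
  SimpleGraph.fromRel (fun a b => a.2 ≠ b.2 ∧ G.Adj a.1 b.1)

def Psi6 := doubleCover Psi5

def Lambda1 : SimpleGraph (Fin 4) := ⊤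
def Lambda2 : SimpleGraph (Fin 3 ⊕ Fin 3) := completeBipartiteGraph (Fin 3) (Fin 3)
def cubeGraph : SimpleGraph (Fin 3 → ZMod 2) :=
  SimpleGraph.fromRel (fun a b => (Finset.univ.filter fun i => a i ≠ b i).card = 1)
def Lambda3 := cubeGraph
def Lambda4 : SimpleGraph {s : Finset (Fin 5) // s.card = 2} := kneser 5 2
def Lambda5 : SimpleGraph ({v : Fin 3 → ZMod 2 // v ≠ 0} × Fin 2) :=
  SimpleGraph.fromRel (fun a b => a.2 ≠ b.2 ∧ ∑ i, a.1.1 i * b.1.1 i = 0)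
def Lambda6 := doubleCover Lambda4

-- tau, rho, sigma
def tauFun (r s : ℕ) (i : ZMod r) :
    ZMod r × (Fin s → ZMod 2) → ZMod r × (Fin s → ZMod 2) :=
  fun a => (a.1, fun j => if a.1 + ((j : ℕ) : ZMod r) = i then a.2 j + 1 else a.2 j)

lemma tauFun_involutive (r s : ℕ) (i : ZMod r) : Function.Involutive (tauFun r s i) := by
  intro a
  unfold tauFun
  refine Prod.ext rfl ?_
  funext j
  by_cases h : a.1 + ((j : ℕ) : ZMod r) = i
  · simp only [h, if_pos]
    rw [add_assoc, show (1 : ZMod 2) + 1 = 0 from rfl, add_zero]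
  · simp [h]

/-- The permutation `τ_i` of the vertices of `C(r,s)`. -/
def tauPerm (r s : ℕ) (i : ZMod r) : Equiv.Perm (ZMod r × (Fin s → ZMod 2)) :=
  (tauFun_involutive r s i).toPerm

def rhoPerm (r s : ℕ) : Equiv.Perm (ZMod r × (Fin s → ZMod 2)) :=
  (Equiv.addRight (1 : ZMod r)).prodCongr (Equiv.refl _)

def sigmaFun (r s : ℕ) :
    ZMod r × (Fin s → ZMod 2) → ZMod r × (Fin s → ZMod 2) :=
  fun a => (1 - (s : ZMod r) - a.1, fun j => a.2 j.rev)

lemma sigmaFun_involutive (r s : ℕ) : Function.Involutive (sigmaFun r s) := by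
  intro a
  unfold sigmaFun
  refine Prod.ext ?_ ?_
  · simp only
    ring
  · funext j
    simp [Fin.rev_rev]

def sigmaPerm (r s : ℕ) : Equiv.Perm (ZMod r × (Fin s → ZMod 2)) :=
  (sigmaFun_involutive r s).toPerm

/-- The group `K = ⟨τ_i : i ∈ ZMod r⟩`. -/
def pxK (r s : ℕ) : Subgroup (Equiv.Perm (ZMod r × (Fin s → ZMod 2))) :=
  Subgroup.closure (Set.range (tauPerm r s))

/-- The group `H = ⟨K, ρ, σ⟩`. -/
def pxH (r s : ℕ) : Subgroup (Equiv.Perm (ZMod r × (Fin s → ZMod 2))) :=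
  Subgroup.closure (Set.range (tauPerm r s) ∪ {rhoPerm r s, sigmaPerm r s})

/-- Quotient graph of `Γ` by the orbits of a group action. -/
def quotGraph {V : Type*} (G : Type*) [Group G] [MulAction G V] (Γ : SimpleGraph V) :
    SimpleGraph (MulAction.orbitRel.Quotient G V) :=
  SimpleGraph.fromRel (fun a b => ∃ u v : V,
    (Quotient.mk (MulAction.orbitRel G V) u : MulAction.orbitRel.Quotient G V) = a ∧
    (Quotient.mk (MulAction.orbitRel G V) v : MulAction.orbitRel.Quotient G V) = b ∧
    Γ.Adj u v)


section AuxPX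

variable {V G : Type*} [Group G] [MulAction G V]

/-- Orbit class map. -/
abbrev pcls (N : Subgroup G) (v : V) : MulAction.orbitRel.Quotient N V :=
  Quotient.mk (MulAction.orbitRel N V) v

lemma pcls_eq_iff (N : Subgroup G) {u w : V} :
    pcls N u = pcls N w ↔ ∃ n : N, (n : G) • w = u := by
  constructor
  · intro h
    exact MulAction.orbitRel_apply.mp (Quotient.exact h)
  · intro h
    exact Quotient.sound (MulAction.orbitRel_apply.mpr h)

lemma pcls_smul_coe (N : Subgroup G) (n : N) (u : V) :
    pcls N ((n : G) • u) = pcls N u :=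
  (pcls_eq_iff N).mpr ⟨n, rfl⟩

lemma pcls_smul_conj {N : Subgroup G} (hN : N.Normal) (g : G) {u w : V}
    (h : pcls N w = pcls N u) : pcls N (g • w) = pcls N (g • u) := by
  obtain ⟨n, hn⟩ := (pcls_eq_iff N).mp h
  refine (pcls_eq_iff N).mpr ⟨⟨g * n * g⁻¹, hN.conj_mem n n.2 g⟩, ?_⟩
  show (g * (n : G) * g⁻¹) • (g • u) = g • w
  rw [smul_smul, show g * (n:G) * g⁻¹ * g = g * (n:G) by group, mul_smul, hn]

lemma semireg_eq_one {N : Subgroup G}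
    (hsemi : ∀ n : N, (∃ v : V, n • v = v) → n = 1)
    {n : G} (hn : n ∈ N) {x : V} (hx : n • x = x) : n = 1 := by
  have := hsemi ⟨n, hn⟩ ⟨x, hx⟩
  exact congrArg Subtype.val this

variable [Fintype V]

/-- Pull a quotient edge back to a neighbour of a chosen vertex. -/
lemma quot_adj_pull {Γ : SimpleGraph V} {N : Subgroup G}
    (hact : ∀ (g : G) (u v : V), Γ.Adj (g • u) (g • v) ↔ Γ.Adj u v)
    (x : V) (O : MulAction.orbitRel.Quotient N V)
    (h : (quotGraph N Γ).Adj (pcls N x) O) :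
    ∃ z : V, Γ.Adj x z ∧ pcls N z = O := by
  rw [quotGraph, fromRel_adj] at h
  obtain ⟨hne, h | h⟩ := h
  · obtain ⟨u, w, hu, hw, huw⟩ := h
    obtain ⟨n, hn⟩ := (pcls_eq_iff N).mp (hu.trans rfl)
    refine ⟨(n : G)⁻¹ • w, ?_, ?_⟩
    · have := (hact ((n : G))⁻¹ u w).mpr huw
      rwa [show ((n : G))⁻¹ • u = x by rw [← hn]; simp] at this
    · rw [show ((n:G))⁻¹ = ((n⁻¹ : N) : G) by simp, pcls_smul_coe]
      exact hw
  · obtain ⟨u, w, hu, hw, huw⟩ := h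
    obtain ⟨n, hn⟩ := (pcls_eq_iff N).mp (hw.trans rfl)
    refine ⟨(n : G)⁻¹ • u, ?_, ?_⟩
    · have := (hact ((n : G))⁻¹ w u).mpr huw.symm
      rwa [show ((n : G))⁻¹ • w = x by rw [← hn]; simp] at this
    · rw [show ((n:G))⁻¹ = ((n⁻¹ : N) : G) by simp, pcls_smul_coe]
      exact hu

/-- Adjacent vertices lie in distinct orbits. -/
lemma adj_pcls_ne {Γ : SimpleGraph V} {N : Subgroup G} (hN : N.Normal)
    (hact : ∀ (g : G) (u v : V), Γ.Adj (g • u) (g • v) ↔ Γ.Adj u v)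
    (hat : ∀ u v u' v' : V, Γ.Adj u v → Γ.Adj u' v' → ∃ g : G, g • u = u' ∧ g • v = v')
    {r : ℕ} (hr : 3 ≤ r) (e : quotGraph N Γ ≃g SimpleGraph.cycleGraph r)
    {x z : V} (hxz : Γ.Adj x z) : pcls N x ≠ pcls N z := by
  intro h
  -- every neighbour of x is in the orbit of x
  have hall : ∀ w : V, Γ.Adj x w → pcls N w = pcls N x := by
    intro w hxw
    obtain ⟨a, hax, haz⟩ := hat x z x w hxz hxw
    have := pcls_smul_conj hN a h
    rw [hax, haz] at this
    exact this.symm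
  -- but the quotient vertex of x has a neighbour
  obtain ⟨m, rfl⟩ : ∃ m, r = m + 3 := ⟨r - 3, by omega⟩
  have hadj : (cycleGraph (m + 3)).Adj (e (pcls N x)) (e (pcls N x) + 1) := by
    rw [show m + 3 = (m + 1) + 2 by omega] at *
    rw [cycleGraph_adj]
    right; simp
  have hq : (quotGraph N Γ).Adj (pcls N x) (e.symm (e (pcls N x) + 1)) := by
    rw [← e.map_adj_iff, e.apply_symm_apply]
    exact hadj
  obtain ⟨z', hz'adj, hz'⟩ := quot_adj_pull hact x _ hq
  rw [hall z' hz'adj] at hz'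
  have h2 := congrArg e hz'
  rw [e.apply_symm_apply] at h2
  simpa using h2.symm

end AuxPX
set_option linter.unusedSectionVars false in
/-- Key counting lemma: exactly two neighbours of `x` in the orbit of a given neighbour `y`. -/
lemma two_in_orbit {V G : Type*} [Fintype V] [Group G] [MulAction G V]
    {Γ : SimpleGraph V} {N : Subgroup G} (hN : N.Normal)
    (hval : ∀ v : V, Nat.card (Γ.neighborSet v) = 4)
    (hact : ∀ (g : G) (u v : V), Γ.Adj (g • u) (g • v) ↔ Γ.Adj u v)
    (hat : ∀ u v u' v' : V, Γ.Adj u v → Γ.Adj u' v' → ∃ g : G, g • u = u' ∧ g • v = v')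
    {r : ℕ} (hr : 3 ≤ r) (e : quotGraph N Γ ≃g SimpleGraph.cycleGraph r)
    {x y : V} (hxy : Γ.Adj x y) :
    ∃ y' : V, y' ≠ y ∧ Γ.Adj x y' ∧ pcls N y' = pcls N y ∧
      ∀ z : V, Γ.Adj x z → pcls N z = pcls N y → z = y ∨ z = y' := by
  obtain ⟨m, rfl⟩ : ∃ m, r = m + 3 := ⟨r - 3, by omega⟩
  have hqadj : ∀ z : V, Γ.Adj x z → (quotGraph N Γ).Adj (pcls N x) (pcls N z) := by
    intro z hz
    rw [quotGraph, fromRel_adj]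
    exact ⟨adj_pcls_ne hN hact hat (by omega) e hz, Or.inl ⟨x, z, rfl, rfl, hz⟩⟩
  have hcyc_mem : ∀ z : V, Γ.Adj x z →
      e (pcls N z) = e (pcls N x) - 1 ∨ e (pcls N z) = e (pcls N x) + 1 := by
    intro z hz
    have h1 : (cycleGraph (m + 3)).Adj (e (pcls N x)) (e (pcls N z)) :=
      e.map_adj_iff.mpr (hqadj z hz)
    have hmem : e (pcls N z) ∈ (cycleGraph (m + 3)).neighborSet (e (pcls N x)) := h1
    rw [cycleGraph_neighborSet] at hmem
    simpa using hmem
  have hne2 : ∀ c : Fin (m + 3), c - 1 ≠ c + 1 := by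
    intro c hcc
    have h0 : (c + 1) - (c - 1) = 0 := by rw [← hcc]; simp
    open Fin.CommRing in
    have h2 : ((2 : Fin (m + 3))) = 0 := by rw [← h0]; ring
    have := congrArg Fin.val h2
    rw [Fin.val_zero] at this
    open Fin.CommRing in
    rw [show ((2 : Fin (m+3))) = ((2 : ℕ) : Fin (m+3)) by norm_cast] at this
    rw [Fin.val_cast_of_lt (by omega)] at this
    omega
  -- choose the other adjacent class
  have hpick : ∃ d : Fin (m + 3), (SimpleGraph.cycleGraph (m+3)).Adj (e (pcls N x)) d ∧
      d ≠ e (pcls N y) ∧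
      ∀ z : V, Γ.Adj x z → pcls N z = pcls N y ∨ e (pcls N z) = d := by
    have hadj1 : (cycleGraph (m+3)).Adj (e (pcls N x)) (e (pcls N x) + 1) := by
      rw [cycleGraph_adj]; right; simp
    have hadj2 : (cycleGraph (m+3)).Adj (e (pcls N x)) (e (pcls N x) - 1) := by
      rw [cycleGraph_adj]; left; simp [sub_sub_cancel]
    rcases hcyc_mem y hxy with h | h
    · refine ⟨e (pcls N x) + 1, hadj1, by rw [h]; exact (hne2 _).symm, ?_⟩
      intro z hz
      rcases hcyc_mem z hz with h' | h'
      · left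
        exact e.injective (by rw [h', h])
      · right; exact h'
    · refine ⟨e (pcls N x) - 1, hadj2, by rw [h]; exact hne2 _, ?_⟩
      intro z hz
      rcases hcyc_mem z hz with h' | h'
      · right; exact h'
      · left
        exact e.injective (by rw [h', h])
  obtain ⟨d, hdadj, hdne, hdcover⟩ := hpick
  -- find a neighbour y₂ with class d
  have hq2 : (quotGraph N Γ).Adj (pcls N x) (e.symm d) := by
    rw [← e.map_adj_iff, e.apply_symm_apply]
    exact hdadj
  obtain ⟨y₂, hy₂adj, hy₂⟩ := quot_adj_pull hact x (e.symm d) hq2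
  have hy₂d : e (pcls N y₂) = d := by rw [hy₂, e.apply_symm_apply]
  have hy₂ne : pcls N y₂ ≠ pcls N y := by
    intro h; exact hdne (by rw [← hy₂d, h])
  -- the two neighbour classes
  set W₁ : Set V := {z | Γ.Adj x z ∧ pcls N z = pcls N y} with hW₁
  set W₂ : Set V := {z | Γ.Adj x z ∧ pcls N z = pcls N y₂} with hW₂
  have hcover : Γ.neighborSet x = W₁ ∪ W₂ := by
    ext z
    simp only [mem_neighborSet, Set.mem_union, hW₁, hW₂, Set.mem_setOf_eq]
    constructor
    · intro hz
      rcases hdcover z hz with h | h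
      · exact Or.inl ⟨hz, h⟩
      · exact Or.inr ⟨hz, e.injective (by rw [h, hy₂d])⟩
    · rintro (⟨h, _⟩ | ⟨h, _⟩) <;> exact h
  have hdisj : Disjoint W₁ W₂ := by
    rw [Set.disjoint_left]
    rintro z ⟨_, h1⟩ ⟨_, h2⟩
    exact hy₂ne (h2.symm.trans h1)
  -- the bijection between the two classes
  obtain ⟨a, hax, hay⟩ := hat x y x y₂ hxy hy₂adj
  have himg : (a • ·) '' W₁ = W₂ := by
    ext w
    constructor
    · rintro ⟨z, ⟨hz1, hz2⟩, rfl⟩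
      refine ⟨?_, ?_⟩
      · have := (hact a x z).mpr hz1
        rwa [hax] at this
      · have := pcls_smul_conj hN a hz2
        rwa [hay] at this
    · rintro ⟨hw1, hw2⟩
      refine ⟨a⁻¹ • w, ⟨?_, ?_⟩, by simp⟩
      · have hx' : a⁻¹ • x = x := by rw [inv_smul_eq_iff, hax]
        have := (hact a⁻¹ x w).mpr hw1
        rwa [hx'] at this
      · rw [← hay] at hw2
        have := pcls_smul_conj hN a⁻¹ hw2
        rwa [inv_smul_smul] at this
  have hcard2 : W₁.ncard = 2 := by
    have hceq : W₁.ncard = W₂.ncard := by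
      rw [← himg, Set.ncard_image_of_injective _ (MulAction.injective a)]
    have hsum : W₁.ncard + W₂.ncard = 4 := by
      rw [← Set.ncard_union_eq hdisj (Set.toFinite _) (Set.toFinite _), ← hcover,
        ← Nat.card_coe_set_eq]
      exact hval x
    omega
  obtain ⟨p, q, hpq, hWpq⟩ := Set.ncard_eq_two.mp hcard2
  have hyW : y ∈ W₁ := ⟨hxy, rfl⟩
  have hmemW : ∀ z : V, z ∈ W₁ → z = p ∨ z = q := by
    intro z hz; rw [hWpq] at hz; simpa using hz
  have hpW : p ∈ W₁ := by rw [hWpq]; simp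
  have hqW : q ∈ W₁ := by rw [hWpq]; simp
  rcases hmemW y hyW with rfl | rfl
  · exact ⟨q, fun h => hpq h.symm, hqW.1, hqW.2, fun z hz hπ => hmemW z ⟨hz, hπ⟩⟩
  · exact ⟨p, hpq, hpW.1, hpW.2, fun z hz hπ => Or.symm (hmemW z ⟨hz, hπ⟩)⟩
/-- Propagation: the fixed-point set of `g²` (for `g` in the kernel `K`) is closed
under adjacency. -/
lemma prop_step {V G : Type*} [Fintype V] [Group G] [MulAction G V]
    {Γ : SimpleGraph V} {N : Subgroup G} (hN : N.Normal)
    (hsemi : ∀ n : N, (∃ v : V, n • v = v) → n = 1)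
    (hval : ∀ v : V, Nat.card (Γ.neighborSet v) = 4)
    (hact : ∀ (g : G) (u v : V), Γ.Adj (g • u) (g • v) ↔ Γ.Adj u v)
    (hat : ∀ u v u' v' : V, Γ.Adj u v → Γ.Adj u' v' → ∃ g : G, g • u = u' ∧ g • v = v')
    {r : ℕ} (hr : 3 ≤ r) (e : quotGraph N Γ ≃g SimpleGraph.cycleGraph r)
    {g : G} (hg : ∀ u : V, pcls N (g • u) = pcls N u)
    {x y : V} (hxy : Γ.Adj x y) (hfix : g • g • x = x) : g • g • y = y := by
  obtain ⟨n, hn⟩ := (pcls_eq_iff N).mp (hg x)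
  set ng : G := (n : G) with hng
  have key : (g * ng * g⁻¹ * ng) • x = x := by
    have h1 : (g * ng * g⁻¹ * ng) • x = g • (ng • (g⁻¹ • (ng • x))) := by
      rw [mul_smul, mul_smul, mul_smul]
    rw [h1, hn, inv_smul_smul, hn]
    exact hfix
  have hw1 : g * ng * g⁻¹ * ng = 1 :=
    semireg_eq_one hsemi (mul_mem (hN.conj_mem n n.2 g) n.2) key
  have hrel : g * ng = ng⁻¹ * g := by
    have h3 : g * ng * g⁻¹ = ng⁻¹ := by rwa [mul_eq_one_iff_eq_inv] at hw1
    rw [← h3]; group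
  obtain ⟨y', hy'ne, hy'adj, hy'π, hchar⟩ := two_in_orbit hN hval hact hat hr e hxy
  have hx' : (ng⁻¹ * g) • x = x := by rw [mul_smul, ← hn, inv_smul_smul]
  have hmem : ∀ z : V, Γ.Adj x z → pcls N z = pcls N y →
      (ng⁻¹ * g) • z = y ∨ (ng⁻¹ * g) • z = y' := by
    intro z hz hπ
    apply hchar
    · have := (hact (ng⁻¹ * g) x z).mpr hz
      rwa [hx'] at this
    · have h1 : pcls N ((ng⁻¹ * g) • z) = pcls N z := by
        rw [mul_smul, show ng⁻¹ = ((n⁻¹ : N) : G) by simp [hng], pcls_smul_coe]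
        exact hg z
      rw [h1, hπ]
  have hgy : ∀ t s : V, (ng⁻¹ * g) • t = s → g • t = ng • s := by
    intro t s ht
    rw [← ht, mul_smul, smul_inv_smul]
  rcases hmem y hxy rfl with ht | ht
  · have h1 := hgy y y ht
    rw [h1, ← mul_smul, hrel, mul_smul, h1, inv_smul_smul]
  · rcases hmem y' hy'adj hy'π with ht' | ht'
    · have h1 := hgy y y' ht
      have h2 := hgy y' y ht'
      rw [h1, ← mul_smul, hrel, mul_smul, h2, inv_smul_smul]
    · exfalso
      exact hy'ne (MulAction.injective (ng⁻¹ * g) (ht'.trans ht.symm))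
/-- Lemma 2.7: if `G ≤ Aut Γ` is arc-transitive on a connected 4-valent graph `Γ`,
`N ⊴ G` is semiregular and `Γ/N` is a cycle of length `r ≥ 3`, then for the kernel `K`
of the action of `G` on the `N`-orbits, every vertex-stabiliser `K_v` is an elementary
abelian 2-group. -/
theorem statement6 {V G : Type*} [Fintype V] [Group G] [MulAction G V] [FaithfulSMul G V]
    (Γ : SimpleGraph V) (hconn : Γ.Connected)
    (hval : ∀ v : V, Nat.card (Γ.neighborSet v) = 4)
    (hact : ∀ (g : G) (u v : V), Γ.Adj (g • u) (g • v) ↔ Γ.Adj u v)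
    (hat : ∀ u v u' v' : V, Γ.Adj u v → Γ.Adj u' v' → ∃ g : G, g • u = u' ∧ g • v = v')
    (N : Subgroup G) (hNnormal : N.Normal)
    (hsemi : ∀ n : N, (∃ v : V, n • v = v) → n = 1)
    (r : ℕ) (hr : 3 ≤ r) (hcyc : Nonempty (quotGraph N Γ ≃g SimpleGraph.cycleGraph r))
    (v : V) :
    (∀ g : G, (∀ u : V, g • u ∈ MulAction.orbit N u) → g • v = v → g * g = 1) ∧
      (∀ g h : G, (∀ u : V, g • u ∈ MulAction.orbit N u) → g • v = v →
        (∀ u : V, h • u ∈ MulAction.orbit N u) → h • v = v → g * h = h * g) := by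
  obtain ⟨e⟩ := hcyc
  have hpcls : ∀ (g : G), (∀ u : V, g • u ∈ MulAction.orbit N u) →
      (∀ u : V, pcls N (g • u) = pcls N u) := by
    intro g h u
    obtain ⟨n, hn⟩ := h u
    exact (pcls_eq_iff N).mpr ⟨n, hn⟩
  have main : ∀ g : G, (∀ u : V, pcls N (g • u) = pcls N u) → g • v = v → g * g = 1 := by
    intro g hg hv
    have hfixv : g • g • v = v := by rw [hv, hv]
    have step : ∀ {u w : V} (p : Γ.Walk u w), g • g • u = u → g • g • w = w := by
      intro u w p
      induction p with
      | nil => exact id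
      | cons h p ih =>
        intro hu
        exact ih (prop_step hNnormal hsemi hval hact hat hr e hg h hu)
    apply FaithfulSMul.eq_of_smul_eq_smul (α := V)
    intro u
    rw [one_smul, mul_smul]
    exact step (hconn.preconnected v u).some hfixv
  refine ⟨fun g hg hv => main g (hpcls g hg) hv, ?_⟩
  intro g h hgK hgv hhK hhv
  have hg2 := main g (hpcls g hgK) hgv
  have hh2 := main h (hpcls h hhK) hhv
  have hgh : ∀ u : V, pcls N ((g * h) • u) = pcls N u := by
    intro u
    rw [mul_smul, hpcls g hgK _, hpcls h hhK u]
  have hghv : (g * h) • v = v := by rw [mul_smul, hhv, hgv]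
  have h2 := main (g * h) hgh hghv
  have h3 : g * h = (g * h)⁻¹ := eq_inv_of_mul_eq_one_left h2
  rw [mul_inv_rev, inv_eq_of_mul_eq_one_left hg2, inv_eq_of_mul_eq_one_left hh2] at h3
  exact h3
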